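/- Let p ∈ (0,1], ε ∈ (0,1), and T a positive integer. Let X₁, X₂, … be i.i.d. Bernoulli(p) random variables and let N be the (almost surely finite) index of the T-th success, i.e., N = min{n : X₁ + ⋯ + X_n = T}. Then P(T/N > p(1+ε)) ≤ (e^{ε/(1+ε)}/(1+ε))^T. -/

import Mathlib

open MeasureTheory ProbabilityTheory

/-- Upper-tail bound for the negative-binomial estimator: if `X₁, X₂, …` are
i.i.d. Bernoulli(p) and `N` is the index of the `T`-th success, then
`P(T/N > p(1+ε)) ≤ (e^{ε/(1+ε)}/(1+ε))^T`. -/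
theorem negBinomial_estimator_upper_tail
    {Ω : Type*} [MeasurableSpace Ω] (μ : Measure Ω) [IsProbabilityMeasure μ]
    (p : ℝ) (hp : p ∈ Set.Ioc (0:ℝ) 1) (ε : ℝ) (hε : ε ∈ Set.Ioo (0:ℝ) 1)
    (T : ℕ) (hT : 0 < T)
    (X : ℕ → Ω → Bool) (hXmeas : ∀ i, Measurable (X i))
    (hXindep : iIndepFun X μ)
    (hXdist : ∀ i, μ {ω | X i ω = true} = ENNReal.ofReal p)
    (N : Ω → ℕ)
    (hN : ∀ ω, N ω = sInf {n : ℕ | ∑ i ∈ Finset.range n, (if X i ω then 1 else 0) = T}) :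
    μ {ω | p * (1 + ε) < (T : ℝ) / (N ω : ℝ)}
      ≤ ENNReal.ofReal ((Real.exp (ε / (1 + ε)) / (1 + ε)) ^ T) := by
  obtain ⟨hp0, hp1⟩ := hp
  obtain ⟨hε0, hε1⟩ := hε
  have h1ε : (0:ℝ) < 1 + ε := by linarith
  set t : ℝ := Real.log (1 + ε) with ht_def
  have ht0 : 0 ≤ t := Real.log_nonneg (by linarith)
  have het : Real.exp t = 1 + ε := Real.exp_log h1ε
  set Y : ℕ → Ω → ℝ := fun i ω => if X i ω then 1 else 0 with hYdef
  have hYmeas : ∀ i, Measurable (Y i) := fun i =>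
    (measurable_of_countable (fun b : Bool => if b then (1:ℝ) else 0)).comp (hXmeas i)
  have hYindep : iIndepFun Y μ :=
    hXindep.comp (fun _ b => if b then (1:ℝ) else 0)
      (fun _ => measurable_of_countable _)
  -- the event sets
  have hs : ∀ i, MeasurableSet {ω | X i ω = true} := fun i => by
    have : {ω | X i ω = true} = X i ⁻¹' {true} := rfl
    rw [this]; exact hXmeas i (measurableSet_singleton true)
  -- integrand rewrite
  have hfun : ∀ i, (fun ω => Real.exp (t * Y i ω))
      = fun ω => Set.indicator {ω | X i ω = true} (fun _ => Real.exp t - 1) ω + 1 := by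
    intro i
    funext ω
    by_cases h : X i ω = true
    · simp [hYdef, h, Set.indicator_of_mem, Set.mem_setOf_eq]
    · simp [hYdef, h, Set.indicator_of_notMem, Set.mem_setOf_eq]
  have hint : ∀ i, Integrable (fun ω => Real.exp (t * Y i ω)) μ := by
    intro i
    rw [hfun i]
    exact ((integrable_const _).indicator (hs i)).add (integrable_const 1)
  have hmgf : ∀ i, mgf (Y i) μ t = 1 + ε * p := by
    intro i
    rw [mgf, hfun i, integral_add ((integrable_const _).indicator (hs i)) (integrable_const 1),
      integral_indicator_const _ (hs i), integral_const, measureReal_def, hXdist i]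
    simp [ENNReal.toReal_ofReal hp0.le, het]
    ring
  -- the comparison index
  set m : ℕ := Nat.floor ((T:ℝ) / (p * (1 + ε))) with hm_def
  -- subset inclusion
  have hsub : {ω | p * (1 + ε) < (T : ℝ) / (N ω : ℝ)}
      ⊆ {ω | (T:ℝ) ≤ (∑ i ∈ Finset.range m, Y i) ω} := by
    intro ω hω
    simp only [Set.mem_setOf_eq] at hω ⊢
    have hN0 : N ω ≠ 0 := by
      intro h
      rw [h] at hω
      simp only [Nat.cast_zero, div_zero] at hω
      nlinarith
    have hNcast : (0:ℝ) < (N ω : ℝ) := by positivity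
    have hNlt : (N ω : ℝ) ≤ (T:ℝ) / (p * (1 + ε)) := by
      rw [le_div_iff₀ (by positivity)]
      have := (lt_div_iff₀ hNcast).mp hω
      nlinarith
    have hNm : N ω ≤ m := Nat.le_floor hNlt
    have hne : {n : ℕ | ∑ i ∈ Finset.range n, (if X i ω then 1 else 0) = T}.Nonempty := by
      rw [Set.nonempty_iff_ne_empty]
      intro h
      apply hN0
      rw [hN ω, h, Nat.sInf_empty]
    have hmem := Nat.sInf_mem hne
    rw [← hN ω] at hmem
    simp only [Set.mem_setOf_eq] at hmem
    have hcast : (T:ℝ) = ∑ i ∈ Finset.range (N ω), Y i ω := by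
      rw [← hmem]
      push_cast
      refine Finset.sum_congr rfl fun i _ => ?_
      by_cases h : X i ω <;> simp [hYdef, h]
    rw [Finset.sum_apply]
    rw [hcast]
    refine Finset.sum_le_sum_of_subset_of_nonneg (Finset.range_subset_range.mpr hNm)
      (fun i _ _ => ?_)
    by_cases h : X i ω <;> simp [hYdef, h]
  -- Chernoff bound
  have hintS : Integrable (fun ω => Real.exp (t * (∑ i ∈ Finset.range m, Y i) ω)) μ :=
    hYindep.integrable_exp_mul_sum hYmeas (fun i _ => hint i)
  have hchern := measure_ge_le_exp_mul_mgf (X := ∑ i ∈ Finset.range m, Y i) (μ := μ)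
    (T:ℝ) ht0 hintS
  rw [hYindep.mgf_sum hYmeas (Finset.range m)] at hchern
  have hprod : ∏ i ∈ Finset.range m, mgf (Y i) μ t = (1 + ε * p) ^ m := by
    rw [Finset.prod_congr rfl (fun i _ => hmgf i), Finset.prod_const, Finset.card_range]
  rw [hprod] at hchern
  -- real arithmetic
  have hbound : Real.exp (-t * T) * (1 + ε * p) ^ m
      ≤ (Real.exp (ε / (1 + ε)) / (1 + ε)) ^ T := by
    have h1 : (1 + ε * p) ^ m ≤ Real.exp (ε * p * m) := by
      calc (1 + ε * p) ^ m ≤ (Real.exp (ε * p)) ^ m := by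
            apply pow_le_pow_left₀ (by positivity)
            linarith [Real.add_one_le_exp (ε * p)]
        _ = Real.exp (ε * p * m) := by rw [← Real.exp_nat_mul]; ring_nf
    have hmle : (m:ℝ) ≤ (T:ℝ) / (p * (1 + ε)) := Nat.floor_le (by positivity)
    have h2 : ε * p * m ≤ (T:ℝ) * ε / (1 + ε) := by
      have := mul_le_mul_of_nonneg_left hmle (by positivity : (0:ℝ) ≤ ε * p)
      calc ε * p * m ≤ ε * p * ((T:ℝ) / (p * (1 + ε))) := this
        _ = (T:ℝ) * ε / (1 + ε) := by field_simp
    calc Real.exp (-t * T) * (1 + ε * p) ^ m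
        ≤ Real.exp (-t * T) * Real.exp ((T:ℝ) * ε / (1 + ε)) := by
          refine mul_le_mul_of_nonneg_left ?_ (Real.exp_pos _).le
          exact h1.trans (Real.exp_le_exp.mpr h2)
      _ = Real.exp ((T:ℝ) * (ε / (1 + ε))) / (1 + ε) ^ T := by
          have e1 : Real.exp (-t * (T:ℝ)) = ((1 + ε) ^ T)⁻¹ := by
            rw [← het, ← Real.exp_nat_mul, ← Real.exp_neg]
            congr 1
            ring
          rw [e1, mul_comm, div_eq_mul_inv]
          congr 2
          ring
      _ = (Real.exp (ε / (1 + ε)) / (1 + ε)) ^ T := by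
          rw [div_pow, ← Real.exp_nat_mul]
  calc μ {ω | p * (1 + ε) < (T : ℝ) / (N ω : ℝ)}
      ≤ μ {ω | (T:ℝ) ≤ (∑ i ∈ Finset.range m, Y i) ω} := measure_mono hsub
    _ = ENNReal.ofReal ((μ {ω | (T:ℝ) ≤ (∑ i ∈ Finset.range m, Y i) ω}).toReal) :=
        (ENNReal.ofReal_toReal (measure_ne_top _ _)).symm
    _ ≤ ENNReal.ofReal ((Real.exp (ε / (1 + ε)) / (1 + ε)) ^ T) :=
        ENNReal.ofReal_le_ofReal (hchern.trans hbound)
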